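/- Let H be a regular hexagon centered at the origin (open), and let p, q be the midpoints of two adjacent sides. Then the lattice ℤp + ℤq is H-admissible, and its covolume equals V(H)/4, so Δ(H) ≤ V(H)/4; combined with Minkowski's theorem, Δ(H) = V(H)/4. -/

import Mathlib

open MeasureTheory

noncomputable section

/-- The lattice `g ℤ²` in `ℝ²`. -/
def lattice2 (g : Matrix (Fin 2) (Fin 2) ℝ) : Set (Fin 2 → ℝ) :=
  {x | ∃ m : Fin 2 → ℤ, x = g.mulVec (fun i => (m i : ℝ))}

/-- `K`-admissibility: the lattice meets `K` only at the origin. -/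
def Admissible2 (K : Set (Fin 2 → ℝ)) (g : Matrix (Fin 2) (Fin 2) ℝ) : Prop :=
  lattice2 g ∩ K = {0}

/-- The critical determinant `Δ(K)`. -/
def critDet2 (K : Set (Fin 2 → ℝ)) : ℝ :=
  sInf {d | ∃ g : Matrix (Fin 2) (Fin 2) ℝ, g.det ≠ 0 ∧ Admissible2 K g ∧ d = |g.det|}

/-- The critical locus `𝓛(K)`: the set of `K`-admissible lattices of covolume `Δ(K)`. -/
def critLocus2 (K : Set (Fin 2 → ℝ)) : Set (Set (Fin 2 → ℝ)) :=
  {L | ∃ g : Matrix (Fin 2) (Fin 2) ℝ, g.det ≠ 0 ∧ L = lattice2 g ∧ Admissible2 K g ∧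
    |g.det| = critDet2 K}

/-- The open unit disc in `ℝ²`. -/
def unitDisc : Set (Fin 2 → ℝ) := {x | x 0 ^ 2 + x 1 ^ 2 < 1}

/-- The open unit square `(-1,1)²`. -/
def openSquare : Set (Fin 2 → ℝ) := {x | |x 0| < 1 ∧ |x 1| < 1}

/-- A matrix generating the hexagonal lattice `ℤ·(1,0) + ℤ·(1/2,√3/2)`. -/
def hexMat : Matrix (Fin 2) (Fin 2) ℝ := !![1, 1/2; 0, Real.sqrt 3 / 2]

namespace HexAux

open Set

lemma s3_pos : (0:ℝ) < Real.sqrt 3 := Real.sqrt_pos.mpr (by norm_num)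

lemma s3_sq : Real.sqrt 3 * Real.sqrt 3 = 3 := Real.mul_self_sqrt (by norm_num)

/-- The closed hexagon, as intersection of six half-planes. -/
def Hcl (r : ℝ) : Set (Fin 2 → ℝ) :=
  {x | |x 1| ≤ Real.sqrt 3 * r / 2 ∧ |Real.sqrt 3 * x 0 + x 1| ≤ Real.sqrt 3 * r ∧
    |Real.sqrt 3 * x 0 - x 1| ≤ Real.sqrt 3 * r}

/-- The open hexagon. -/
def Hop (r : ℝ) : Set (Fin 2 → ℝ) :=
  {x | |x 1| < Real.sqrt 3 * r / 2 ∧ |Real.sqrt 3 * x 0 + x 1| < Real.sqrt 3 * r ∧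
    |Real.sqrt 3 * x 0 - x 1| < Real.sqrt 3 * r}

/-- The vertices of the hexagon. -/
def w (r : ℝ) : Fin 6 → Fin 2 → ℝ :=
  ![![r, 0], ![r/2, Real.sqrt 3 * r/2], ![-r/2, Real.sqrt 3 * r/2], ![-r, 0],
    ![-r/2, -(Real.sqrt 3 * r/2)], ![r/2, -(Real.sqrt 3 * r/2)]]

lemma w0 (r : ℝ) : w r 0 = ![r, 0] := rfl
lemma w1 (r : ℝ) : w r 1 = ![r/2, Real.sqrt 3 * r/2] := rfl
lemma w2 (r : ℝ) : w r 2 = ![-r/2, Real.sqrt 3 * r/2] := rfl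
lemma w3 (r : ℝ) : w r 3 = ![-r, 0] := rfl
lemma w4 (r : ℝ) : w r 4 = ![-r/2, -(Real.sqrt 3 * r/2)] := rfl
lemma w5 (r : ℝ) : w r 5 = ![r/2, -(Real.sqrt 3 * r/2)] := rfl

lemma abs_combo {u v c a b : ℝ} (hu : |u| ≤ c) (hv : |v| ≤ c) (ha : 0 ≤ a) (hb : 0 ≤ b)
    (hab : a + b = 1) : |a * u + b * v| ≤ c := by
  calc |a * u + b * v| ≤ |a * u| + |b * v| := abs_add_le _ _
    _ = a * |u| + b * |v| := by rw [abs_mul, abs_mul, abs_of_nonneg ha, abs_of_nonneg hb]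
    _ ≤ a * c + b * c :=
        add_le_add (mul_le_mul_of_nonneg_left hu ha) (mul_le_mul_of_nonneg_left hv hb)
    _ = c := by rw [← add_mul, hab, one_mul]

lemma convex_Hcl (r : ℝ) : Convex ℝ (Hcl r) := by
  intro x hx y hy a b ha hb hab
  obtain ⟨h1, h2, h3⟩ := hx
  obtain ⟨k1, k2, k3⟩ := hy
  have e0 : (a • x + b • y) 0 = a * x 0 + b * y 0 := rfl
  have e1 : (a • x + b • y) 1 = a * x 1 + b * y 1 := rfl
  refine ⟨?_, ?_, ?_⟩
  · rw [e1]; exact abs_combo h1 k1 ha hb hab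
  · rw [e0, e1, show Real.sqrt 3 * (a * x 0 + b * y 0) + (a * x 1 + b * y 1)
      = a * (Real.sqrt 3 * x 0 + x 1) + b * (Real.sqrt 3 * y 0 + y 1) by ring]
    exact abs_combo h2 k2 ha hb hab
  · rw [e0, e1, show Real.sqrt 3 * (a * x 0 + b * y 0) - (a * x 1 + b * y 1)
      = a * (Real.sqrt 3 * x 0 - x 1) + b * (Real.sqrt 3 * y 0 - y 1) by ring]
    exact abs_combo h3 k3 ha hb hab

lemma pair_mem_Hcl {r a b : ℝ} (h1 : |b| ≤ Real.sqrt 3 * r / 2)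
    (h2 : |Real.sqrt 3 * a + b| ≤ Real.sqrt 3 * r)
    (h3 : |Real.sqrt 3 * a - b| ≤ Real.sqrt 3 * r) :
    (![a, b] : Fin 2 → ℝ) ∈ Hcl r := by
  refine ⟨?_, ?_, ?_⟩ <;> simpa

lemma w_mem_Hcl {r : ℝ} (hr : 0 ≤ r) (k : Fin 6) : w r k ∈ Hcl r := by
  have h : (0:ℝ) ≤ Real.sqrt 3 * r := mul_nonneg s3_pos.le hr
  fin_cases k <;> apply pair_mem_Hcl <;> (rw [abs_le]; constructor <;> nlinarith [h])

lemma triple_mem {C : Set (Fin 2 → ℝ)} (hC : Convex ℝ C) {p1 p2 p3 : Fin 2 → ℝ}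
    (h1 : p1 ∈ C) (h2 : p2 ∈ C) (h3 : p3 ∈ C) {c1 c2 c3 : ℝ}
    (n1 : 0 ≤ c1) (n2 : 0 ≤ c2) (n3 : 0 ≤ c3) (hs : c1 + c2 + c3 = 1) :
    c1 • p1 + c2 • p2 + c3 • p3 ∈ C := by
  rcases eq_or_lt_of_le (add_nonneg n1 n2) with h | h
  · have hc1 : c1 = 0 := by linarith
    have hc2 : c2 = 0 := by linarith
    have hc3 : c3 = 1 := by linarith
    simpa [hc1, hc2, hc3] using h3
  · have hne : c1 + c2 ≠ 0 := h.ne'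
    have hin : (c1/(c1+c2)) • p1 + (c2/(c1+c2)) • p2 ∈ C :=
      hC h1 h2 (div_nonneg n1 h.le) (div_nonneg n2 h.le)
        (by rw [← add_div, div_self hne])
    have hmem := hC hin h3 h.le n3 (by linarith)
    have ea : (c1 + c2) * (c1/(c1+c2)) = c1 := by field_simp
    have eb : (c1 + c2) * (c2/(c1+c2)) = c2 := by field_simp
    rw [smul_add, smul_smul, smul_smul, ea, eb] at hmem
    exact hmem

lemma combo_mem {C : Set (Fin 2 → ℝ)} (hC : Convex ℝ C) (h0 : (0 : Fin 2 → ℝ) ∈ C)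
    {u v z : Fin 2 → ℝ} (hu : u ∈ C) (hv : v ∈ C) (hz : z ∈ C) (hzuv : u + v = z)
    {a b : ℝ} (ha0 : 0 ≤ a) (ha1 : a ≤ 1) (hb0 : 0 ≤ b) (hb1 : b ≤ 1) :
    a • u + b • v ∈ C := by
  rcases le_or_gt (a + b) 1 with h | h
  · have hmem := triple_mem hC hu hv h0 ha0 hb0 (by linarith : (0:ℝ) ≤ 1 - a - b) (by ring)
    rw [smul_zero, add_zero] at hmem
    exact hmem
  · have hmem := triple_mem hC hu hv hz (by linarith : (0:ℝ) ≤ 1 - b)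
      (by linarith : (0:ℝ) ≤ 1 - a) (by linarith : (0:ℝ) ≤ a + b - 1) (by ring)
    have h2 : (1 - b) • u + (1 - a) • v + (a + b - 1) • z = a • u + b • v := by
      rw [← hzuv]; module
    rwa [h2] at hmem

lemma mem_pp {u v x : Fin 2 → ℝ} {a b : ℝ} (ha0 : 0 ≤ a) (ha1 : a ≤ 1) (hb0 : 0 ≤ b)
    (hb1 : b ≤ 1) (hx : x = a • u + b • v) : x ∈ parallelepiped ![u, v] := by
  rw [mem_parallelepiped_iff]
  refine ⟨![a, b], ⟨?_, ?_⟩, ?_⟩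
  · intro i
    fin_cases i <;> simpa
  · intro i
    fin_cases i <;> simpa
  · rw [Fin.sum_univ_two]
    simp only [Matrix.cons_val_zero, Matrix.cons_val_one, Matrix.head_cons]
    exact hx

lemma pp_subset {C : Set (Fin 2 → ℝ)} (hC : Convex ℝ C) (h0 : (0 : Fin 2 → ℝ) ∈ C)
    {u v z : Fin 2 → ℝ} (hu : u ∈ C) (hv : v ∈ C) (hz : z ∈ C) (hzuv : u + v = z) :
    parallelepiped ![u, v] ⊆ C := by
  intro x hx
  rw [mem_parallelepiped_iff] at hx
  obtain ⟨t, ht, rfl⟩ := hx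
  have hmem := combo_mem hC h0 hu hv hz hzuv (ht.1 0) (ht.2 0) (ht.1 1) (ht.2 1)
  rw [Fin.sum_univ_two]
  simp only [Matrix.cons_val_zero, Matrix.cons_val_one, Matrix.head_cons]
  exact hmem

lemma Hcl_subset_union {r : ℝ} (hr : 0 < r) :
    Hcl r ⊆ parallelepiped ![w r 0, w r 2] ∪ parallelepiped ![w r 2, w r 4] ∪
      parallelepiped ![w r 4, w r 0] := by
  intro x hx
  obtain ⟨h1, h2, h3⟩ := hx
  rw [abs_le] at h1 h2 h3
  have hg := s3_pos
  have hgr : (0:ℝ) < Real.sqrt 3 * r := mul_pos hg hr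
  rcases le_or_gt 0 (x 1) with hx1 | hx1
  · rcases le_or_gt 0 (Real.sqrt 3 * x 0 + x 1) with hA | hA
    · refine Or.inl (Or.inl (mem_pp (a := (Real.sqrt 3 * x 0 + x 1)/(Real.sqrt 3 * r))
        (b := 2 * x 1 / (Real.sqrt 3 * r)) ?_ ?_ ?_ ?_ ?_))
      · exact div_nonneg hA hgr.le
      · rw [div_le_one hgr]; exact h2.2
      · positivity
      · rw [div_le_one hgr]; linarith [h1.2]
      · funext i; fin_cases i <;>
          · simp only [Fin.mk_zero, Fin.mk_one, w0, w2, Pi.add_apply, Pi.smul_apply, smul_eq_mul, Matrix.cons_val_zero,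
              Matrix.cons_val_one, Matrix.head_cons]
            field_simp
            try ring
    · refine Or.inl (Or.inr (mem_pp (a := (x 1 - Real.sqrt 3 * x 0)/(Real.sqrt 3 * r))
        (b := (-(Real.sqrt 3 * x 0) - x 1)/(Real.sqrt 3 * r)) ?_ ?_ ?_ ?_ ?_))
      · apply div_nonneg _ hgr.le; linarith
      · rw [div_le_one hgr]; linarith [h3.1]
      · apply div_nonneg _ hgr.le; linarith
      · rw [div_le_one hgr]; linarith [h2.1]
      · funext i; fin_cases i <;>
          · simp only [Fin.mk_zero, Fin.mk_one, w2, w4, Pi.add_apply, Pi.smul_apply, smul_eq_mul, Matrix.cons_val_zero,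
              Matrix.cons_val_one, Matrix.head_cons]
            field_simp
            try ring
  · rcases le_or_gt (Real.sqrt 3 * x 0) (x 1) with hB | hC
    · refine Or.inl (Or.inr (mem_pp (a := (x 1 - Real.sqrt 3 * x 0)/(Real.sqrt 3 * r))
        (b := (-(Real.sqrt 3 * x 0) - x 1)/(Real.sqrt 3 * r)) ?_ ?_ ?_ ?_ ?_))
      · apply div_nonneg _ hgr.le; linarith
      · rw [div_le_one hgr]; linarith [h3.1]
      · apply div_nonneg _ hgr.le; linarith
      · rw [div_le_one hgr]; linarith [h2.1]
      · funext i; fin_cases i <;>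
          · simp only [Fin.mk_zero, Fin.mk_one, w2, w4, Pi.add_apply, Pi.smul_apply, smul_eq_mul, Matrix.cons_val_zero,
              Matrix.cons_val_one, Matrix.head_cons]
            field_simp
            try ring
    · refine Or.inr (mem_pp (a := (-(2 * x 1))/(Real.sqrt 3 * r))
        (b := (Real.sqrt 3 * x 0 - x 1)/(Real.sqrt 3 * r)) ?_ ?_ ?_ ?_ ?_)
      · apply div_nonneg _ hgr.le; linarith
      · rw [div_le_one hgr]; linarith [h1.1]
      · apply div_nonneg _ hgr.le; linarith
      · rw [div_le_one hgr]; linarith [h3.2]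
      · funext i; fin_cases i <;>
          · simp only [Fin.mk_zero, Fin.mk_one, w4, w0, Pi.add_apply, Pi.smul_apply, smul_eq_mul, Matrix.cons_val_zero,
              Matrix.cons_val_one, Matrix.head_cons]
            field_simp
            try ring

lemma zero_mem_hull {r : ℝ} : (0 : Fin 2 → ℝ) ∈ convexHull ℝ (Set.range (w r)) := by
  have h0 : (0 : Fin 2 → ℝ) = (1/2 : ℝ) • w r 0 + (1/2 : ℝ) • w r 3 := by
    funext i
    fin_cases i <;>
      · simp only [Fin.mk_zero, Fin.mk_one, w0, w3, Pi.add_apply, Pi.smul_apply, smul_eq_mul,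
          Matrix.cons_val_zero, Matrix.cons_val_one, Matrix.head_cons, Pi.zero_apply]
        ring
  rw [h0]
  exact (convex_convexHull ℝ _) (subset_convexHull ℝ _ (Set.mem_range_self 0))
    (subset_convexHull ℝ _ (Set.mem_range_self 3)) (by norm_num) (by norm_num) (by norm_num)

lemma w_mem_hull {r : ℝ} (k : Fin 6) : w r k ∈ convexHull ℝ (Set.range (w r)) :=
  subset_convexHull ℝ _ (Set.mem_range_self k)

lemma sum02 (r : ℝ) : w r 0 + w r 2 = w r 1 := by
  funext i
  fin_cases i <;>
    · simp only [Fin.mk_zero, Fin.mk_one, w0, w1, w2, Pi.add_apply, Matrix.cons_val_zero,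
        Matrix.cons_val_one, Matrix.head_cons]
      ring

lemma sum24 (r : ℝ) : w r 2 + w r 4 = w r 3 := by
  funext i
  fin_cases i <;>
    · simp only [Fin.mk_zero, Fin.mk_one, w2, w3, w4, Pi.add_apply, Matrix.cons_val_zero,
        Matrix.cons_val_one, Matrix.head_cons]
      ring

lemma sum40 (r : ℝ) : w r 4 + w r 0 = w r 5 := by
  funext i
  fin_cases i <;>
    · simp only [Fin.mk_zero, Fin.mk_one, w0, w4, w5, Pi.add_apply, Matrix.cons_val_zero,
        Matrix.cons_val_one, Matrix.head_cons]
      ring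

lemma union_subset_hull {r : ℝ} :
    parallelepiped ![w r 0, w r 2] ∪ parallelepiped ![w r 2, w r 4] ∪
      parallelepiped ![w r 4, w r 0] ⊆ convexHull ℝ (Set.range (w r)) := by
  have hC := convex_convexHull ℝ (Set.range (w r))
  refine Set.union_subset (Set.union_subset ?_ ?_) ?_
  · exact pp_subset hC zero_mem_hull (w_mem_hull 0) (w_mem_hull 2) (w_mem_hull 1) (sum02 r)
  · exact pp_subset hC zero_mem_hull (w_mem_hull 2) (w_mem_hull 4) (w_mem_hull 3) (sum24 r)
  · exact pp_subset hC zero_mem_hull (w_mem_hull 4) (w_mem_hull 0) (w_mem_hull 5) (sum40 r)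

lemma hull_subset_Hcl {r : ℝ} (hr : 0 < r) :
    convexHull ℝ (Set.range (w r)) ⊆ Hcl r :=
  convexHull_min (by rintro _ ⟨k, rfl⟩; exact w_mem_Hcl hr.le k) (convex_Hcl r)

lemma hull_eq_Hcl {r : ℝ} (hr : 0 < r) : convexHull ℝ (Set.range (w r)) = Hcl r :=
  subset_antisymm (hull_subset_Hcl hr)
    (fun x hx => union_subset_hull (Hcl_subset_union hr hx))

lemma Hcl_eq_union {r : ℝ} (hr : 0 < r) :
    Hcl r = parallelepiped ![w r 0, w r 2] ∪ parallelepiped ![w r 2, w r 4] ∪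
      parallelepiped ![w r 4, w r 0] :=
  subset_antisymm (Hcl_subset_union hr)
    (fun x hx => hull_subset_Hcl hr (union_subset_hull hx))

lemma isOpen_Hop (r : ℝ) : IsOpen (Hop r) := by
  have c1 : Continuous fun x : Fin 2 → ℝ => |x 1| := (continuous_apply 1).abs
  have c2 : Continuous fun x : Fin 2 → ℝ => |Real.sqrt 3 * x 0 + x 1| :=
    ((continuous_const.mul (continuous_apply 0)).add (continuous_apply 1)).abs
  have c3 : Continuous fun x : Fin 2 → ℝ => |Real.sqrt 3 * x 0 - x 1| :=
    ((continuous_const.mul (continuous_apply 0)).sub (continuous_apply 1)).abs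
  have : Hop r = (fun x : Fin 2 → ℝ => |x 1|) ⁻¹' Iio (Real.sqrt 3 * r / 2) ∩
      ((fun x : Fin 2 → ℝ => |Real.sqrt 3 * x 0 + x 1|) ⁻¹' Iio (Real.sqrt 3 * r) ∩
       (fun x : Fin 2 → ℝ => |Real.sqrt 3 * x 0 - x 1|) ⁻¹' Iio (Real.sqrt 3 * r)) := rfl
  rw [this]
  exact (isOpen_Iio.preimage c1).inter ((isOpen_Iio.preimage c2).inter (isOpen_Iio.preimage c3))

lemma interior_halfplane_lt {S : Set (Fin 2 → ℝ)} {a b c : ℝ} (hab : a ≠ 0 ∨ b ≠ 0)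
    (hS : ∀ y ∈ S, a * y 0 + b * y 1 ≤ c) {x : Fin 2 → ℝ} (hx : x ∈ interior S) :
    a * x 0 + b * x 1 < c := by
  obtain ⟨ε, hε, hball⟩ := Metric.isOpen_iff.1 isOpen_interior x hx
  refine lt_of_le_of_ne (hS x (interior_subset hx)) fun heq => ?_
  rcases hab with ha | hb
  · set δ := if 0 < a then ε/2 else -(ε/2) with hδ
    have habs : |δ| = ε/2 := by
      rw [hδ]
      split_ifs
      · exact abs_of_pos (half_pos hε)
      · rw [abs_neg]; exact abs_of_pos (half_pos hε)
    have hyball : Function.update x 0 (x 0 + δ) ∈ Metric.ball x ε := by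
      rw [Metric.mem_ball, dist_pi_lt_iff hε]
      intro i
      rcases eq_or_ne i 0 with rfl | hi
      · rw [Function.update_self, Real.dist_eq, show x 0 + δ - x 0 = δ by ring, habs]; linarith
      · rw [Function.update_of_ne hi, dist_self]; exact hε
    have hmem := hS _ (interior_subset (hball hyball))
    rw [Function.update_self, Function.update_of_ne (by norm_num : (1 : Fin 2) ≠ 0)] at hmem
    have hpos : 0 < a * δ := by
      rcases lt_trichotomy a 0 with h | h | h
      · rw [hδ, if_neg (not_lt.2 h.le)]; nlinarith
      · exact absurd h ha
      · rw [hδ, if_pos h]; positivity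
    nlinarith
  · set δ := if 0 < b then ε/2 else -(ε/2) with hδ
    have habs : |δ| = ε/2 := by
      rw [hδ]
      split_ifs
      · exact abs_of_pos (half_pos hε)
      · rw [abs_neg]; exact abs_of_pos (half_pos hε)
    have hyball : Function.update x 1 (x 1 + δ) ∈ Metric.ball x ε := by
      rw [Metric.mem_ball, dist_pi_lt_iff hε]
      intro i
      rcases eq_or_ne i 1 with rfl | hi
      · rw [Function.update_self, Real.dist_eq, show x 1 + δ - x 1 = δ by ring, habs]; linarith
      · rw [Function.update_of_ne hi, dist_self]; exact hε
    have hmem := hS _ (interior_subset (hball hyball))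
    rw [Function.update_self, Function.update_of_ne (by norm_num : (0 : Fin 2) ≠ 1)] at hmem
    have hpos : 0 < b * δ := by
      rcases lt_trichotomy b 0 with h | h | h
      · rw [hδ, if_neg (not_lt.2 h.le)]; nlinarith
      · exact absurd h hb
      · rw [hδ, if_pos h]; positivity
    nlinarith

lemma interior_Hcl {r : ℝ} (hr : 0 < r) : interior (Hcl r) = Hop r := by
  have hg := s3_pos
  apply subset_antisymm
  · intro x hx
    refine ⟨abs_lt.2 ⟨?_, ?_⟩, abs_lt.2 ⟨?_, ?_⟩, abs_lt.2 ⟨?_, ?_⟩⟩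
    · have := interior_halfplane_lt (a := 0) (b := -1) (c := Real.sqrt 3 * r / 2) (Or.inr (by norm_num))
        (fun y hy => by have := (abs_le.1 hy.1).1; linarith) hx
      linarith
    · have := interior_halfplane_lt (a := 0) (b := 1) (c := Real.sqrt 3 * r / 2) (Or.inr one_ne_zero)
        (fun y hy => by have := (abs_le.1 hy.1).2; linarith) hx
      linarith
    · have := interior_halfplane_lt (a := -(Real.sqrt 3)) (b := -1) (c := Real.sqrt 3 * r) (Or.inl (by linarith))
        (fun y hy => by have := (abs_le.1 hy.2.1).1; linarith) hx
      linarith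
    · have := interior_halfplane_lt (a := Real.sqrt 3) (b := 1) (c := Real.sqrt 3 * r) (Or.inl (by linarith))
        (fun y hy => by have := (abs_le.1 hy.2.1).2; linarith) hx
      linarith
    · have := interior_halfplane_lt (a := -(Real.sqrt 3)) (b := 1) (c := Real.sqrt 3 * r) (Or.inl (by linarith))
        (fun y hy => by have := (abs_le.1 hy.2.2).1; linarith) hx
      linarith
    · have := interior_halfplane_lt (a := Real.sqrt 3) (b := -1) (c := Real.sqrt 3 * r) (Or.inl (by linarith))
        (fun y hy => by have := (abs_le.1 hy.2.2).2; linarith) hx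
      linarith
  · exact interior_maximal (fun x hx => ⟨hx.1.le, hx.2.1.le, hx.2.2.le⟩) (isOpen_Hop r)

lemma volume_pp (v : Fin 2 → Fin 2 → ℝ) :
    volume (parallelepiped v) = ENNReal.ofReal |v 0 0 * v 1 1 - v 0 1 * v 1 0| := by
  have hb : (Pi.basisFun ℝ (Fin 2)).addHaar = volume := by
    rw [Module.Basis.addHaar_def, Module.Basis.parallelepiped_basisFun, addHaarMeasure_eq_volume_pi]
  rw [← hb, Measure.addHaar_parallelepiped]
  congr 1
  rw [Module.Basis.det_apply, Matrix.det_fin_two]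
  simp only [Module.Basis.toMatrix_apply, Pi.basisFun_repr]
  ring

lemma line_volume (a b : ℝ) (hab : a ≠ 0 ∨ b ≠ 0) :
    volume {x : Fin 2 → ℝ | a * x 0 + b * x 1 = 0} = 0 := by
  classical
  let f : (Fin 2 → ℝ) →ₗ[ℝ] ℝ := a • LinearMap.proj 0 + b • LinearMap.proj 1
  have hset : {x : Fin 2 → ℝ | a * x 0 + b * x 1 = 0} = (LinearMap.ker f : Set (Fin 2 → ℝ)) := by
    ext x
    simp [f, LinearMap.mem_ker, smul_eq_mul]
  rw [hset]
  refine Measure.addHaar_submodule _ _ fun htop => ?_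
  rcases hab with ha | hb
  · have hmem : Pi.single (0 : Fin 2) (1:ℝ) ∈ LinearMap.ker f := htop ▸ Submodule.mem_top
    rw [LinearMap.mem_ker] at hmem
    simp [f, Pi.single_apply] at hmem
    exact ha hmem
  · have hmem : Pi.single (1 : Fin 2) (1:ℝ) ∈ LinearMap.ker f := htop ▸ Submodule.mem_top
    rw [LinearMap.mem_ker] at hmem
    simp [f, Pi.single_apply] at hmem
    exact hb hmem

lemma pp_coord {u v : Fin 2 → ℝ} {x : Fin 2 → ℝ} (hx : x ∈ parallelepiped ![u, v]) :
    ∃ s t : ℝ, 0 ≤ s ∧ 0 ≤ t ∧ x 0 = s * u 0 + t * v 0 ∧ x 1 = s * u 1 + t * v 1 := by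
  rw [mem_parallelepiped_iff] at hx
  obtain ⟨c, hc, rfl⟩ := hx
  refine ⟨c 0, c 1, hc.1 0, hc.1 1, ?_, ?_⟩ <;>
    · rw [Fin.sum_univ_two]
      simp

lemma inter12 {r : ℝ} (hr : 0 < r) :
    volume (parallelepiped ![w r 0, w r 2] ∩ parallelepiped ![w r 2, w r 4]) = 0 := by
  have hg := s3_pos
  refine measure_mono_null (fun x hx => ?_) (line_volume (Real.sqrt 3) 1 (Or.inl hg.ne'))
  obtain ⟨h1, h2⟩ := hx
  obtain ⟨s, t, hs, ht, e0, e1⟩ := pp_coord h1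
  obtain ⟨s', t', hs', ht', e0', e1'⟩ := pp_coord h2
  have v1 : Real.sqrt 3 * x 0 + x 1 = Real.sqrt 3 * r * s := by
    rw [e0, e1]
    simp only [w0, w2, Matrix.cons_val_zero, Matrix.cons_val_one, Matrix.head_cons]
    ring
  have v2 : Real.sqrt 3 * x 0 + x 1 = -(Real.sqrt 3 * r * t') := by
    rw [e0', e1']
    simp only [w2, w4, Matrix.cons_val_zero, Matrix.cons_val_one, Matrix.head_cons]
    ring
  have hgr : (0:ℝ) < Real.sqrt 3 * r := mul_pos hg hr
  show Real.sqrt 3 * x 0 + 1 * x 1 = 0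
  rw [one_mul]
  nlinarith [mul_nonneg hgr.le hs, mul_nonneg hgr.le ht']

lemma inter23 {r : ℝ} (hr : 0 < r) :
    volume (parallelepiped ![w r 2, w r 4] ∩ parallelepiped ![w r 4, w r 0]) = 0 := by
  have hg := s3_pos
  refine measure_mono_null (fun x hx => ?_) (line_volume (Real.sqrt 3) (-1) (Or.inl hg.ne'))
  obtain ⟨h1, h2⟩ := hx
  obtain ⟨s, t, hs, ht, e0, e1⟩ := pp_coord h1
  obtain ⟨s', t', hs', ht', e0', e1'⟩ := pp_coord h2
  have v1 : Real.sqrt 3 * x 0 - x 1 = -(Real.sqrt 3 * r * s) := by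
    rw [e0, e1]
    simp only [w2, w4, Matrix.cons_val_zero, Matrix.cons_val_one, Matrix.head_cons]
    ring
  have v2 : Real.sqrt 3 * x 0 - x 1 = Real.sqrt 3 * r * t' := by
    rw [e0', e1']
    simp only [w4, w0, Matrix.cons_val_zero, Matrix.cons_val_one, Matrix.head_cons]
    ring
  have hgr : (0:ℝ) < Real.sqrt 3 * r := mul_pos hg hr
  show Real.sqrt 3 * x 0 + (-1) * x 1 = 0
  nlinarith [mul_nonneg hgr.le hs, mul_nonneg hgr.le ht']

lemma inter13 {r : ℝ} (hr : 0 < r) :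
    volume (parallelepiped ![w r 0, w r 2] ∩ parallelepiped ![w r 4, w r 0]) = 0 := by
  have hg := s3_pos
  refine measure_mono_null (fun x hx => ?_) (line_volume 0 1 (Or.inr one_ne_zero))
  obtain ⟨h1, h2⟩ := hx
  obtain ⟨s, t, hs, ht, e0, e1⟩ := pp_coord h1
  obtain ⟨s', t', hs', ht', e0', e1'⟩ := pp_coord h2
  have v1 : x 1 = Real.sqrt 3 * r / 2 * t := by
    rw [e1]
    simp only [w0, w2, Matrix.cons_val_zero, Matrix.cons_val_one, Matrix.head_cons]
    ring
  have v2 : x 1 = -(Real.sqrt 3 * r / 2 * s') := by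
    rw [e1']
    simp only [w4, w0, Matrix.cons_val_zero, Matrix.cons_val_one, Matrix.head_cons]
    ring
  have hgr : (0:ℝ) < Real.sqrt 3 * r / 2 := by positivity
  show 0 * x 0 + 1 * x 1 = 0
  nlinarith [mul_nonneg hgr.le ht, mul_nonneg hgr.le hs']

lemma volume_Hcl {r : ℝ} (hr : 0 < r) :
    volume (Hcl r) = ENNReal.ofReal (3 * Real.sqrt 3 * r^2 / 2) := by
  have hg := s3_pos
  have hvol : ∀ k l : Fin 6, volume (parallelepiped ![w r k, w r l]) =
      ENNReal.ofReal |w r k 0 * w r l 1 - w r k 1 * w r l 0| := by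
    intro k l
    rw [volume_pp]
    simp only [Matrix.cons_val_zero, Matrix.cons_val_one, Matrix.head_cons]
  have h1 : volume (parallelepiped ![w r 0, w r 2]) = ENNReal.ofReal (Real.sqrt 3 * r^2 / 2) := by
    rw [hvol]
    simp only [w0, w2, Matrix.cons_val_zero, Matrix.cons_val_one, Matrix.head_cons]
    rw [show r * (Real.sqrt 3 * r / 2) - 0 * (-r/2) = Real.sqrt 3 * r^2/2 by ring,
      abs_of_nonneg (by positivity)]
  have h2 : volume (parallelepiped ![w r 2, w r 4]) = ENNReal.ofReal (Real.sqrt 3 * r^2 / 2) := by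
    rw [hvol]
    simp only [w2, w4, Matrix.cons_val_zero, Matrix.cons_val_one, Matrix.head_cons]
    rw [show -r/2 * -(Real.sqrt 3 * r / 2) - Real.sqrt 3 * r / 2 * (-r/2)
        = Real.sqrt 3 * r^2/2 by ring,
      abs_of_nonneg (by positivity)]
  have h3 : volume (parallelepiped ![w r 4, w r 0]) = ENNReal.ofReal (Real.sqrt 3 * r^2 / 2) := by
    rw [hvol]
    simp only [w4, w0, Matrix.cons_val_zero, Matrix.cons_val_one, Matrix.head_cons]
    rw [show -r/2 * 0 - -(Real.sqrt 3 * r / 2) * r = Real.sqrt 3 * r^2/2 by ring,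
      abs_of_nonneg (by positivity)]
  have m2 : NullMeasurableSet (parallelepiped ![w r 2, w r 4]) volume :=
    (convex_parallelepiped _).nullMeasurableSet _
  have m3 : NullMeasurableSet (parallelepiped ![w r 4, w r 0]) volume :=
    (convex_parallelepiped _).nullMeasurableSet _
  have d12 : AEDisjoint volume (parallelepiped ![w r 0, w r 2])
      (parallelepiped ![w r 2, w r 4]) := inter12 hr
  have d3 : AEDisjoint volume
      (parallelepiped ![w r 0, w r 2] ∪ parallelepiped ![w r 2, w r 4])
      (parallelepiped ![w r 4, w r 0]) := by
    unfold AEDisjoint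
    rw [Set.union_inter_distrib_right]
    exact measure_union_null (inter13 hr) (inter23 hr)
  rw [Hcl_eq_union hr, measure_union₀ m3 d3, measure_union₀ m2 d12, h1, h2, h3,
    ← ENNReal.ofReal_add (by positivity) (by positivity),
    ← ENNReal.ofReal_add (by positivity) (by positivity)]
  congr 1
  ring

lemma volume_Hop {r : ℝ} (hr : 0 < r) :
    volume (Hop r) = ENNReal.ofReal (3 * Real.sqrt 3 * r^2 / 2) := by
  have h1 : volume (Hop r) ≤ volume (Hcl r) :=
    measure_mono (fun x hx => ⟨hx.1.le, hx.2.1.le, hx.2.2.le⟩)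
  have h2 : volume (Hcl r) ≤ volume (Hop r) := by
    have hsub : Hcl r ⊆ Hop r ∪ frontier (Hcl r) := by
      intro x hx
      by_cases h : x ∈ Hop r
      · exact Or.inl h
      · refine Or.inr ⟨subset_closure hx, ?_⟩
        rw [interior_Hcl hr]
        exact h
    calc volume (Hcl r) ≤ volume (Hop r ∪ frontier (Hcl r)) := measure_mono hsub
      _ ≤ volume (Hop r) + volume (frontier (Hcl r)) := measure_union_le _ _
      _ = volume (Hop r) := by rw [(convex_Hcl r).addHaar_frontier volume, add_zero]
  rw [le_antisymm h1 h2]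
  exact volume_Hcl hr

lemma core {r : ℝ} (hr : 0 < r) (m n : ℤ) {x : Fin 2 → ℝ}
    (h0 : x 0 = m * (3*r/4)) (h1 : x 1 = m * (Real.sqrt 3 * r/4) + n * (Real.sqrt 3 * r/2))
    (hx : x ∈ Hop r) : m = 0 ∧ n = 0 := by
  obtain ⟨e1, e2, e3⟩ := hx
  have hg := s3_pos
  have hgr : (0:ℝ) < Real.sqrt 3 * r := mul_pos hg hr
  rw [h1] at e1
  rw [h0, h1] at e2 e3
  have k1 : |(m:ℝ) + 2*n| < 2 := by
    have h : |(Real.sqrt 3 * r / 4) * ((m:ℝ) + 2*n)| < Real.sqrt 3 * r / 2 := by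
      rw [show (Real.sqrt 3 * r / 4) * ((m:ℝ) + 2*n)
        = (m:ℝ) * (Real.sqrt 3 * r/4) + (n:ℝ) * (Real.sqrt 3 * r/2) by ring]
      exact e1
    rw [abs_mul, abs_of_pos (by positivity)] at h
    nlinarith [abs_nonneg ((m:ℝ) + 2*n)]
  have k2 : |2*(m:ℝ) + n| < 2 := by
    have h : |(Real.sqrt 3 * r / 2) * (2*(m:ℝ) + n)| < Real.sqrt 3 * r := by
      rw [show (Real.sqrt 3 * r / 2) * (2*(m:ℝ) + n)
        = Real.sqrt 3 * ((m:ℝ) * (3*r/4)) + ((m:ℝ) * (Real.sqrt 3 * r/4)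
          + (n:ℝ) * (Real.sqrt 3 * r/2)) by ring]
      exact e2
    rw [abs_mul, abs_of_pos (by positivity)] at h
    nlinarith [abs_nonneg (2*(m:ℝ) + n)]
  have k3 : |(m:ℝ) - n| < 2 := by
    have h : |(Real.sqrt 3 * r / 2) * ((m:ℝ) - n)| < Real.sqrt 3 * r := by
      rw [show (Real.sqrt 3 * r / 2) * ((m:ℝ) - n)
        = Real.sqrt 3 * ((m:ℝ) * (3*r/4)) - ((m:ℝ) * (Real.sqrt 3 * r/4)
          + (n:ℝ) * (Real.sqrt 3 * r/2)) by ring]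
      exact e3
    rw [abs_mul, abs_of_pos (by positivity)] at h
    nlinarith [abs_nonneg ((m:ℝ) - n)]
  have K1 : |m + 2*n| < 2 := by
    have : ((|m + 2*n| : ℤ) : ℝ) < 2 := by rw [Int.cast_abs]; push_cast; push_cast at k1; exact k1
    exact_mod_cast this
  have K2 : |2*m + n| < 2 := by
    have : ((|2*m + n| : ℤ) : ℝ) < 2 := by rw [Int.cast_abs]; push_cast; push_cast at k2; exact k2
    exact_mod_cast this
  have K3 : |m - n| < 2 := by
    have : ((|m - n| : ℤ) : ℝ) < 2 := by rw [Int.cast_abs]; push_cast; push_cast at k3; exact k3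
    exact_mod_cast this
  rw [abs_lt] at K1 K2 K3
  omega

lemma lower_bound {r : ℝ} (hr : 0 < r) {H : Set (Fin 2 → ℝ)} (hH : H = Hop r)
    (g : Matrix (Fin 2) (Fin 2) ℝ) (hdet : g.det ≠ 0) (hadm : Admissible2 H g) :
    3 * Real.sqrt 3 * r^2 / 8 ≤ |g.det| := by
  have hg := s3_pos
  by_contra hlt
  push_neg at hlt
  have hinv : Invertible g := g.invertibleOfIsUnitDet (isUnit_iff_ne_zero.2 hdet)
  let b : Module.Basis (Fin 2) ℝ (Fin 2 → ℝ) := (Pi.basisFun ℝ (Fin 2)).map (g.toLinearEquiv' hinv)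
  have hb : ∀ i j, b i j = g j i := by
    intro i j
    show ((Pi.basisFun ℝ (Fin 2)).map (g.toLinearEquiv' hinv)) i j = g j i
    rw [Module.Basis.map_apply, Pi.basisFun_apply]
    show (Matrix.toLin' g) (Pi.single i 1) j = g j i
    rw [Matrix.toLin'_apply]
    simp [Matrix.mulVec, dotProduct, Pi.single_apply]
  haveI hcnt : Countable (Submodule.span ℤ (Set.range ⇑b)).toAddSubgroup := by
    change Countable (Submodule.span ℤ (Set.range ⇑b))
    infer_instance
  have fund := ZSpan.isAddFundamentalDomain' b volume
  have hdetb : (Matrix.of ⇑b).det = g.det := by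
    rw [show Matrix.of ⇑b = g.transpose by ext i j; exact hb i j, Matrix.det_transpose]
  have hsymm : ∀ x ∈ H, -x ∈ H := by
    intro x hx
    rw [hH] at hx ⊢
    obtain ⟨a1, a2, a3⟩ := hx
    refine ⟨?_, ?_, ?_⟩
    · show |(-x) 1| < _
      rw [Pi.neg_apply, abs_neg]; exact a1
    · show |Real.sqrt 3 * (-x) 0 + (-x) 1| < _
      rw [Pi.neg_apply, Pi.neg_apply,
        show Real.sqrt 3 * (-x 0) + (-x 1) = -(Real.sqrt 3 * x 0 + x 1) by ring, abs_neg]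
      exact a2
    · show |Real.sqrt 3 * (-x) 0 - (-x) 1| < _
      rw [Pi.neg_apply, Pi.neg_apply,
        show Real.sqrt 3 * (-x 0) - (-x 1) = -(Real.sqrt 3 * x 0 - x 1) by ring, abs_neg]
      exact a3
  have hconv : Convex ℝ H := by
    rw [hH, ← interior_Hcl hr]
    exact (convex_Hcl r).interior
  have hineq : volume (ZSpan.fundamentalDomain b) * 2 ^ Module.finrank ℝ (Fin 2 → ℝ)
      < volume H := by
    rw [ZSpan.volume_fundamentalDomain, hdetb, hH, volume_Hop hr,
      show Module.finrank ℝ (Fin 2 → ℝ) = 2 by simp,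
      show ((2:ENNReal))^2 = 4 by norm_num,
      show (4:ENNReal) = ENNReal.ofReal 4 by rw [ENNReal.ofReal_ofNat],
      ← ENNReal.ofReal_mul (abs_nonneg _)]
    rw [ENNReal.ofReal_lt_ofReal_iff (by positivity)]
    linarith
  obtain ⟨x, hx0, hxH⟩ :=
    exists_ne_zero_mem_lattice_of_measure_mul_two_pow_lt_measure fund hsymm hconv hineq
  have hxlat : (x : Fin 2 → ℝ) ∈ lattice2 g := by
    have hx' : (x : Fin 2 → ℝ) ∈ Submodule.span ℤ (Set.range ⇑b) := x.2
    rw [Submodule.mem_span_range_iff_exists_fun ℤ] at hx'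
    obtain ⟨c, hc⟩ := hx'
    refine ⟨c, ?_⟩
    rw [← hc]
    funext j
    rw [Fin.sum_univ_two]
    simp only [Pi.add_apply, Pi.smul_apply]
    rw [hb 0 j, hb 1 j]
    simp only [Matrix.mulVec, dotProduct, Fin.sum_univ_two, zsmul_eq_mul]
    ring
  have hx_zero : (x : Fin 2 → ℝ) = 0 := by
    have hmem : (x : Fin 2 → ℝ) ∈ lattice2 g ∩ H := ⟨hxlat, hxH⟩
    rw [hadm] at hmem
    exact hmem
  exact hx0 (ZeroMemClass.coe_eq_zero.mp hx_zero)

end HexAux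

open HexAux

/-- For the open regular hexagon `H` (vertices at angle multiples of `π/3`, circumradius
`r`), the lattice generated by the midpoints `p, q` of two adjacent sides is
`H`-admissible, has covolume `V(H)/4`, and `Δ(H) = V(H)/4`. -/
theorem hexagon_critical_lattice (r : ℝ) (hr : 0 < r)
    (v : ℕ → Fin 2 → ℝ)
    (hv : ∀ k : ℕ, v k = ![r * Real.cos (k * Real.pi / 3), r * Real.sin (k * Real.pi / 3)])
    (H : Set (Fin 2 → ℝ))
    (hH : H = interior (convexHull ℝ (Set.range fun k : Fin 6 => v k)))
    (p q : Fin 2 → ℝ) (hp : p = (1/2 : ℝ) • (v 0 + v 1)) (hq : q = (1/2 : ℝ) • (v 1 + v 2)) :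
    (∀ m n : ℤ, m • p + n • q ∈ H → m • p + n • q = 0) ∧
      |p 0 * q 1 - p 1 * q 0| = (volume H).toReal / 4 ∧
      critDet2 H = (volume H).toReal / 4 := by
  have hg := s3_pos
  -- trigonometric values
  have e0 : ((0:ℕ):ℝ) * Real.pi / 3 = 0 := by norm_num
  have e1 : ((1:ℕ):ℝ) * Real.pi / 3 = Real.pi / 3 := by norm_num
  have e2 : ((2:ℕ):ℝ) * Real.pi / 3 = Real.pi - Real.pi / 3 := by push_cast; ring
  have e3 : ((3:ℕ):ℝ) * Real.pi / 3 = Real.pi := by push_cast; ring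
  have e4 : ((4:ℕ):ℝ) * Real.pi / 3 = Real.pi + Real.pi / 3 := by push_cast; ring
  have e5 : ((5:ℕ):ℝ) * Real.pi / 3 = 2 * Real.pi - Real.pi / 3 := by push_cast; ring
  have c4 : Real.cos (Real.pi + Real.pi / 3) = -(1/2) := by
    rw [Real.cos_add, Real.cos_pi, Real.sin_pi, Real.cos_pi_div_three]; ring
  have s4 : Real.sin (Real.pi + Real.pi / 3) = -(Real.sqrt 3 / 2) := by
    rw [Real.sin_add, Real.sin_pi, Real.cos_pi, Real.sin_pi_div_three]; ring
  have c5 : Real.cos (2 * Real.pi - Real.pi / 3) = 1/2 := by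
    rw [Real.cos_sub, Real.cos_two_pi, Real.sin_two_pi, Real.cos_pi_div_three]; ring
  have s5 : Real.sin (2 * Real.pi - Real.pi / 3) = -(Real.sqrt 3 / 2) := by
    rw [Real.sin_sub, Real.sin_two_pi, Real.cos_two_pi, Real.sin_pi_div_three]; ring
  open Fin.NatCast in
  have hv' : ∀ k : ℕ, k < 6 → v k = w r k := by
    have csimp : ∀ i : Fin 2, True := fun _ => trivial
    intro k hk
    interval_cases k
    · rw [hv 0, e0, Real.cos_zero, Real.sin_zero]
      funext i
      fin_cases i <;>
        · simp only [Nat.cast_zero, w0, Fin.mk_zero, Fin.mk_one, Matrix.cons_val_zero,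
            Matrix.cons_val_one, Matrix.head_cons]
          ring
    · rw [hv 1, e1, Real.cos_pi_div_three, Real.sin_pi_div_three]
      funext i
      fin_cases i <;>
        · simp only [Nat.cast_one, w1, Fin.mk_zero, Fin.mk_one, Matrix.cons_val_zero,
            Matrix.cons_val_one, Matrix.head_cons]
          ring
    · rw [hv 2, e2, Real.cos_pi_sub, Real.sin_pi_sub, Real.cos_pi_div_three,
        Real.sin_pi_div_three]
      funext i
      fin_cases i <;>
        · simp only [Nat.cast_ofNat, w2, Fin.mk_zero, Fin.mk_one, Matrix.cons_val_zero,
            Matrix.cons_val_one, Matrix.head_cons]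
          ring
    · rw [hv 3, e3, Real.cos_pi, Real.sin_pi]
      funext i
      fin_cases i <;>
        · simp only [Nat.cast_ofNat, w3, Fin.mk_zero, Fin.mk_one, Matrix.cons_val_zero,
            Matrix.cons_val_one, Matrix.head_cons]
          ring
    · rw [hv 4, e4, c4, s4]
      funext i
      fin_cases i <;>
        · simp only [Nat.cast_ofNat, w4, Fin.mk_zero, Fin.mk_one, Matrix.cons_val_zero,
            Matrix.cons_val_one, Matrix.head_cons]
          ring
    · rw [hv 5, e5, c5, s5]
      funext i
      fin_cases i <;>
        · simp only [Nat.cast_ofNat, w5, Fin.mk_zero, Fin.mk_one, Matrix.cons_val_zero,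
            Matrix.cons_val_one, Matrix.head_cons]
          ring
  have hrange : (Set.range fun k : Fin 6 => v k) = Set.range (w r) := by
    have hfun : (fun k : Fin 6 => v k) = w r := by
      funext k
      have hk := hv' k.1 k.2
      rwa [Fin.cast_val_eq_self] at hk
    rw [hfun]
  have HH : H = Hop r := by
    rw [hH, hrange, hull_eq_Hcl hr, interior_Hcl hr]
  -- explicit p and q
  have hp' : p = ![3*r/4, Real.sqrt 3 * r/4] := by
    rw [hp, hv' 0 (by norm_num), hv' 1 (by norm_num)]
    funext i
    fin_cases i <;>
      · simp only [Nat.cast_zero, Nat.cast_one, w0, w1, Pi.smul_apply, Pi.add_apply,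
          smul_eq_mul, Fin.mk_zero, Fin.mk_one, Matrix.cons_val_zero, Matrix.cons_val_one,
          Matrix.head_cons]
        ring
  have hq' : q = ![0, Real.sqrt 3 * r/2] := by
    rw [hq, hv' 1 (by norm_num), hv' 2 (by norm_num)]
    funext i
    fin_cases i <;>
      · simp only [Nat.cast_one, Nat.cast_ofNat, w1, w2, Pi.smul_apply, Pi.add_apply,
          smul_eq_mul, Fin.mk_zero, Fin.mk_one, Matrix.cons_val_zero, Matrix.cons_val_one,
          Matrix.head_cons]
        ring
  -- coordinates of lattice points
  have hcoord : ∀ m n : ℤ, (m • p + n • q) 0 = (m:ℝ) * (3*r/4) ∧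
      (m • p + n • q) 1 = (m:ℝ) * (Real.sqrt 3 * r/4) + (n:ℝ) * (Real.sqrt 3 * r/2) := by
    intro m n
    constructor <;>
      · simp only [hp', hq', Pi.add_apply, Pi.smul_apply]
        simp only [Matrix.cons_val_zero, Matrix.cons_val_one, Matrix.head_cons]
        simp only [smul_eq_mul, zsmul_eq_mul]
        try ring
  -- Part 1: admissibility
  have part1 : ∀ m n : ℤ, m • p + n • q ∈ H → m • p + n • q = 0 := by
    intro m n hmem
    rw [HH] at hmem
    obtain ⟨hm, hn⟩ := core hr m n (hcoord m n).1 (hcoord m n).2 hmem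
    rw [hm, hn]
    simp
  -- volume of H
  have hV : (volume H).toReal = 3 * Real.sqrt 3 * r^2 / 2 := by
    rw [HH, volume_Hop hr, ENNReal.toReal_ofReal (by positivity)]
  have hV4 : (volume H).toReal / 4 = 3 * Real.sqrt 3 * r^2 / 8 := by rw [hV]; ring
  -- Part 2: covolume
  have part2 : |p 0 * q 1 - p 1 * q 0| = (volume H).toReal / 4 := by
    rw [hp', hq', hV4]
    simp only [Matrix.cons_val_zero, Matrix.cons_val_one, Matrix.head_cons]
    rw [show 3*r/4 * (Real.sqrt 3 * r/2) - Real.sqrt 3 * r/4 * 0 = 3 * Real.sqrt 3 * r^2/8 by ring,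
      abs_of_nonneg (by positivity)]
  -- Part 3: critical determinant
  refine ⟨part1, part2, ?_⟩
  set g₀ : Matrix (Fin 2) (Fin 2) ℝ := !![3*r/4, 0; Real.sqrt 3 * r/4, Real.sqrt 3 * r/2] with hg₀
  have hdet0 : g₀.det = 3 * Real.sqrt 3 * r^2 / 8 := by
    rw [hg₀, Matrix.det_fin_two_of]
    ring
  have hmulvec : ∀ c : Fin 2 → ℤ,
      g₀.mulVec (fun i => (c i : ℝ)) = c 0 • p + c 1 • q := by
    intro c
    funext j
    fin_cases j <;>
      · simp only [hg₀, hp', hq', Matrix.mulVec, dotProduct, Fin.sum_univ_two,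
          Pi.add_apply, Pi.smul_apply]
        simp only [Fin.mk_zero, Fin.mk_one, Matrix.cons_val_zero, Matrix.cons_val_one,
          Matrix.head_cons, Matrix.cons_val', Matrix.empty_val', Matrix.cons_val_fin_one,
          Matrix.of_apply, Matrix.vecHead, Matrix.vecTail, Function.comp_apply]
        simp only [smul_eq_mul, zsmul_eq_mul]
        ring
  have hadm0 : Admissible2 H g₀ := by
    unfold Admissible2
    ext x
    constructor
    · rintro ⟨⟨c, rfl⟩, hxH⟩
      rw [hmulvec c] at hxH ⊢
      exact part1 (c 0) (c 1) hxH
    · intro hx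
      rw [Set.mem_singleton_iff] at hx
      subst hx
      refine ⟨⟨fun _ => 0, ?_⟩, ?_⟩
      · rw [show (fun i => (((fun _ => (0:ℤ)) i : ℤ) : ℝ)) = (0 : Fin 2 → ℝ) by funext; simp,
          Matrix.mulVec_zero]
      · rw [HH]
        refine ⟨?_, ?_, ?_⟩ <;>
          · show |_| < _
            simp only [Pi.zero_apply, mul_zero, add_zero, sub_zero, abs_zero]
            positivity
  have hub : (volume H).toReal / 4 ∈
      {d | ∃ g : Matrix (Fin 2) (Fin 2) ℝ, g.det ≠ 0 ∧ Admissible2 H g ∧ d = |g.det|} := by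
    refine ⟨g₀, ?_, hadm0, ?_⟩
    · rw [hdet0]; positivity
    · rw [hdet0, abs_of_nonneg (by positivity), hV4]
  have hlb : ∀ d ∈ {d | ∃ g : Matrix (Fin 2) (Fin 2) ℝ,
      g.det ≠ 0 ∧ Admissible2 H g ∧ d = |g.det|}, (volume H).toReal / 4 ≤ d := by
    rintro d ⟨g, hgdet, hgadm, rfl⟩
    rw [hV4]
    exact lower_bound hr HH g hgdet hgadm
  unfold critDet2
  exact le_antisymm (csInf_le ⟨_, hlb⟩ hub) (le_csInf ⟨_, hub⟩ hlb)

end
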